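/- Uniqueness of the two-sided solution (pathwise form): let ε > 0 and let b : ℝ → ℝ be continuous. Then there is at most one continuous function l : ℝ → ℝ such that l_t = l_s + 2(b_t − b_s) − 2ε ∫_s^t sinh(l_u) du for all real numbers s ≤ t; that is, any two continuous functions on the whole real line satisfying this family of integral equations coincide. -/

import Mathlib

open MeasureTheory intervalIntegral Real

/-- Hyperbolic identity used for the contraction estimate. -/
lemma sinh_sub_sinh_quarter (m q : ℝ) :
    Real.sinh (m + 2 * q) - Real.sinh (m - 2 * q)
      = 4 * Real.cosh m * Real.sinh q * Real.cosh q := by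
  rw [Real.sinh_add, Real.sinh_sub, Real.sinh_two_mul]
  ring

/-- Uniqueness of the two-sided solution (pathwise form): for `ε > 0` and a continuous
`b : ℝ → ℝ`, any two continuous functions `l¹, l² : ℝ → ℝ` satisfying
`l t = l s + 2 (b t − b s) − 2ε ∫_s^t sinh (l u) du` for all `s ≤ t` coincide. -/
theorem two_sided_uniqueness
    (ε : ℝ) (hε : 0 < ε)
    (b l₁ l₂ : ℝ → ℝ)
    (hb : Continuous b) (hl₁ : Continuous l₁) (hl₂ : Continuous l₂)
    (heq₁ : ∀ s t : ℝ, s ≤ t →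
      l₁ t = l₁ s + 2 * (b t - b s) - 2 * ε * ∫ u in s..t, Real.sinh (l₁ u))
    (heq₂ : ∀ s t : ℝ, s ≤ t →
      l₂ t = l₂ s + 2 * (b t - b s) - 2 * ε * ∫ u in s..t, Real.sinh (l₂ u)) :
    l₁ = l₂ := by
  -- the drift of the difference
  set f : ℝ → ℝ := fun u => Real.sinh (l₁ u) - Real.sinh (l₂ u) with hfdef
  have hfc : Continuous f := (Real.continuous_sinh.comp hl₁).sub (Real.continuous_sinh.comp hl₂)
  -- derivative of the difference
  have hd : ∀ t : ℝ, HasDerivAt (fun x => l₁ x - l₂ x) (-(2 * ε * f t)) t := by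
    intro t
    have hI : HasDerivAt (fun x => ∫ u in (t - 1)..x, f u) (f t) t :=
      intervalIntegral.integral_hasDerivAt_right (hfc.intervalIntegrable _ _)
        (hfc.stronglyMeasurableAtFilter _ _) hfc.continuousAt
    have hg : HasDerivAt (fun x => (l₁ (t - 1) - l₂ (t - 1))
        - 2 * ε * ∫ u in (t - 1)..x, f u) (-(2 * ε * f t)) t :=
      (hI.const_mul (2 * ε)).const_sub _
    refine hg.congr_of_eventuallyEq ?_
    filter_upwards [Ioi_mem_nhds (show t - 1 < t by linarith)] with x hx
    have hx' : t - 1 ≤ x := le_of_lt hx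
    have h1 := heq₁ (t - 1) x hx'
    have h2 := heq₂ (t - 1) x hx'
    have hsub : ∫ u in (t - 1)..x, f u
        = (∫ u in (t - 1)..x, Real.sinh (l₁ u)) - ∫ u in (t - 1)..x, Real.sinh (l₂ u) :=
      intervalIntegral.integral_sub
        ((Real.continuous_sinh.comp hl₁).intervalIntegrable _ _)
        ((Real.continuous_sinh.comp hl₂).intervalIntegrable _ _)
    rw [h1, h2, hsub]; ring
  -- quarter difference
  set q : ℝ → ℝ := fun x => (l₁ x - l₂ x) / 4 with hqdef
  have hq : ∀ t : ℝ, HasDerivAt q (-(2 * ε * f t) / 4) t := fun t => (hd t).div_const 4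
  -- bounded Lyapunov function E = tanh(d/4)^2 and Gronwall factor
  set E : ℝ → ℝ := fun x => (Real.sinh (q x) / Real.cosh (q x)) ^ 2 with hEdef
  set G : ℝ → ℝ := fun x => E x * Real.exp (4 * ε * x) with hGdef
  have hG : ∀ t : ℝ, HasDerivAt G
      (Real.exp (4 * ε * t) * (4 * ε) * (Real.sinh (q t) / Real.cosh (q t)) ^ 2
        * (1 - Real.cosh ((l₁ t + l₂ t) / 2))) t := by
    intro t
    have hC : (0 : ℝ) < Real.cosh (q t) := Real.cosh_pos _
    have hsin : HasDerivAt (fun x => Real.sinh (q x))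
        (Real.cosh (q t) * (-(2 * ε * f t) / 4)) t := (Real.hasDerivAt_sinh _).comp t (hq t)
    have hcos : HasDerivAt (fun x => Real.cosh (q x))
        (Real.sinh (q t) * (-(2 * ε * f t) / 4)) t := (Real.hasDerivAt_cosh _).comp t (hq t)
    have hw : HasDerivAt (fun x => Real.sinh (q x) / Real.cosh (q x))
        ((Real.cosh (q t) * (-(2 * ε * f t) / 4) * Real.cosh (q t)
          - Real.sinh (q t) * (Real.sinh (q t) * (-(2 * ε * f t) / 4)))
          / Real.cosh (q t) ^ 2) t := hsin.div hcos hC.ne'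
    have hE' : HasDerivAt E ((2 : ℕ) * (Real.sinh (q t) / Real.cosh (q t)) ^ 1
        * ((Real.cosh (q t) * (-(2 * ε * f t) / 4) * Real.cosh (q t)
          - Real.sinh (q t) * (Real.sinh (q t) * (-(2 * ε * f t) / 4)))
          / Real.cosh (q t) ^ 2)) t := hw.pow 2
    have hexp : HasDerivAt (fun x => Real.exp (4 * ε * x))
        (Real.exp (4 * ε * t) * (4 * ε * 1)) t :=
      (Real.hasDerivAt_exp _).comp t ((hasDerivAt_id t).const_mul (4 * ε))
    have hGt := hE'.mul hexp
    refine hGt.congr_deriv ?_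
    symm
    -- now prove the algebraic identity for the derivative value
    have hkey : f t = 4 * Real.cosh ((l₁ t + l₂ t) / 2) * Real.sinh (q t) * Real.cosh (q t) := by
      have h1 : l₁ t = (l₁ t + l₂ t) / 2 + 2 * q t := by simp only [hqdef]; ring
      have h2 : l₂ t = (l₁ t + l₂ t) / 2 - 2 * q t := by simp only [hqdef]; ring
      have := sinh_sub_sinh_quarter ((l₁ t + l₂ t) / 2) (q t)
      simp only [hfdef]
      rw [← this]
      congr 1
      · rw [← h1]
      · rw [← h2]
    have hpyth : Real.cosh (q t) ^ 2 - Real.sinh (q t) ^ 2 = 1 :=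
      Real.cosh_sq_sub_sinh_sq _
    have hCne : Real.cosh (q t) ≠ 0 := hC.ne'
    set S := Real.sinh (q t) with hS
    set C := Real.cosh (q t) with hCdef
    set M := Real.cosh ((l₁ t + l₂ t) / 2) with hM
    have hwval : (C * (-(2 * ε * f t) / 4) * C - S * (S * (-(2 * ε * f t) / 4))) / C ^ 2
        = -(2 * ε * M * S) / C := by
      rw [hkey, div_eq_div_iff (pow_ne_zero 2 hCne) hCne]
      linear_combination (-(2 * ε * M * S * C ^ 2)) * hpyth
    rw [hwval]
    have hEt : E t = (S / C) ^ 2 := rfl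
    rw [hEt]
    field_simp
    ring
  -- derivative of G is nonpositive
  have hG' : ∀ t : ℝ, Real.exp (4 * ε * t) * (4 * ε) * (Real.sinh (q t) / Real.cosh (q t)) ^ 2
      * (1 - Real.cosh ((l₁ t + l₂ t) / 2)) ≤ 0 := by
    intro t
    have h1 : 1 - Real.cosh ((l₁ t + l₂ t) / 2) ≤ 0 := by
      have := Real.one_le_cosh ((l₁ t + l₂ t) / 2); linarith
    have h2 : 0 ≤ Real.exp (4 * ε * t) * (4 * ε) * (Real.sinh (q t) / Real.cosh (q t)) ^ 2 :=
      by positivity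
    exact mul_nonpos_of_nonneg_of_nonpos h2 h1
  have hanti : Antitone G := antitone_of_hasDerivAt_nonpos hG hG'
  -- E is bounded by 1
  have hEle1 : ∀ t : ℝ, E t ≤ 1 := by
    intro t
    have hC : (0 : ℝ) < Real.cosh (q t) := Real.cosh_pos _
    have hpyth : Real.cosh (q t) ^ 2 - Real.sinh (q t) ^ 2 = 1 := Real.cosh_sq_sub_sinh_sq _
    have : (Real.sinh (q t) / Real.cosh (q t)) ^ 2 = Real.sinh (q t) ^ 2 / Real.cosh (q t) ^ 2 :=
      div_pow _ _ 2
    simp only [hEdef, this]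
    rw [div_le_one (by positivity)]
    nlinarith
  -- conclude E t = 0 for every t
  have hE0 : ∀ t : ℝ, E t = 0 := by
    intro t
    have hub : ∀ s : ℝ, s ≤ t → E t ≤ Real.exp (4 * ε * s - 4 * ε * t) := by
      intro s hs
      have h1 : G t ≤ G s := hanti hs
      have h2 : E s * Real.exp (4 * ε * s) ≤ Real.exp (4 * ε * s) := by
        nlinarith [hEle1 s, Real.exp_pos (4 * ε * s)]
      have h3 : E t * Real.exp (4 * ε * t) ≤ Real.exp (4 * ε * s) := le_trans h1 h2
      rw [Real.exp_sub]
      rw [le_div_iff₀ (Real.exp_pos _)]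
      exact h3
    have htend : Filter.Tendsto (fun s => Real.exp (4 * ε * s - 4 * ε * t))
        Filter.atBot (nhds 0) := by
      apply Real.tendsto_exp_atBot.comp
      apply Filter.tendsto_atBot_add_const_right
      exact (Filter.tendsto_id.const_mul_atBot (by positivity))
    have hle : E t ≤ 0 :=
      ge_of_tendsto htend (Filter.eventually_atBot.2 ⟨t, fun s hs => hub s hs⟩)
    have hge : 0 ≤ E t := sq_nonneg _
    linarith
  -- from E = 0 deduce l₁ = l₂
  funext t
  have hC : (0 : ℝ) < Real.cosh (q t) := Real.cosh_pos _
  have h0 : (Real.sinh (q t) / Real.cosh (q t)) ^ 2 = 0 := hE0 t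
  have h1 : Real.sinh (q t) = 0 := by
    have := pow_eq_zero_iff (n := 2) (by norm_num) |>.1 h0
    rcases div_eq_zero_iff.1 this with h | h
    · exact h
    · exact absurd h hC.ne'
  have h2 : q t = 0 := Real.sinh_eq_zero.1 h1
  have : (l₁ t - l₂ t) / 4 = 0 := h2
  linarith
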